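/- Let b₁, b₂, α ∈ ℝ with |α| < 1, b₁ ≠ 0 and b₁ - α·b₂ ≠ 0. Define s = (b₂ - α·b₁)/(b₁ - α·b₂) and r = b₂/b₁. Then |b₁ + s·b₂| / √(1 + 2αs + s²) = |b₁| · √(1 + (r - α)²/(1 - α²)). -/

import Mathlib

/-- the scalar identity
`|b₁ + s b₂| / √(1 + 2αs + s²) = |b₁| √(1 + (r - α)²/(1 - α²))`
for `s = (b₂ - α b₁)/(b₁ - α b₂)` and `r = b₂/b₁`. -/
theorem sap_fs_identity (b₁ b₂ α : ℝ) (hα : |α| < 1) (hb₁ : b₁ ≠ 0)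
    (hden : b₁ - α * b₂ ≠ 0)
    (s r : ℝ) (hs : s = (b₂ - α * b₁) / (b₁ - α * b₂)) (hr : r = b₂ / b₁) :
    |b₁ + s * b₂| / Real.sqrt (1 + 2 * α * s + s ^ 2)
      = |b₁| * Real.sqrt (1 + (r - α) ^ 2 / (1 - α ^ 2)) := by
  have h1 : (0:ℝ) < 1 - α ^ 2 := by
    have := abs_lt.mp hα
    nlinarith
  have hpos : 0 < 1 + 2 * α * s + s ^ 2 := by
    nlinarith [sq_nonneg (s + α)]
  have key : (b₁ + s * b₂) ^ 2 / (1 + 2 * α * s + s ^ 2)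
      = b₁ ^ 2 * (1 + (r - α) ^ 2 / (1 - α ^ 2)) := by
    subst hs hr
    rw [div_eq_iff hpos.ne']
    have h1' := h1.ne'
    have hden' : b₁ - b₂ * α ≠ 0 := by rwa [mul_comm]
    field_simp
    ring
  rw [← Real.sqrt_sq_eq_abs (b₁ + s * b₂), ← Real.sqrt_div (sq_nonneg _), key,
    Real.sqrt_mul (sq_nonneg b₁), Real.sqrt_sq_eq_abs]
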